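/- Let 𝒵₀ = {z_{n+1}^d + Σ_{|α|≤d, α_{n+1}=0} a_α z^α = 0} in affine coordinates (z₁,…,z_{n+1}) and parameters (a_α). Given any vector field V₀ = Σ_{j=1}^{n} v_j ∂/∂z_j + v_{n+1} z_{n+1} ∂/∂z_{n+1}, where each v_j = Σ_{k=1}^{n} v_k^{(j)} z_k + v_0^{(j)} is an affine-linear function of z₁,…,z_n and v_{n+1} ∈ ℂ, there exist complex numbers v_α such that the vector field V = Σ_{|α|≤d, α_{n+1}=0} v_α ∂/∂a_α + V₀ is tangent to 𝒵₀; explicitly, the v_α can be chosen so that Σ_α v_α z^α + Σ_{α,j} a_α v_j ∂z^α/∂z_j = 0 identically in z. -/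
import Mathlib

noncomputable section

open MvPolynomial

lemma totalDegree_pderiv_le' {n d : ℕ} (i : Fin n) (p : MvPolynomial (Fin n) ℂ)
    (hp : p.totalDegree ≤ d + 1) : (pderiv i p).totalDegree ≤ d := by
  conv_lhs => rw [p.as_sum, map_sum]
  refine (totalDegree_finset_sum _ _).trans (Finset.sup_le fun s hs => ?_)
  rw [pderiv_monomial]
  by_cases hsi : s i = 0
  · simp [hsi]
  · refine (totalDegree_monomial_le _ _).trans ?_
    have hkey : (s - Finsupp.single i 1) + Finsupp.single i 1 = s := by
      ext j
      by_cases hj : j = i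
      · subst hj; simp; omega
      · simp [Finsupp.single_apply, hj, Ne.symm hj]
    have hsum : (s - Finsupp.single i 1).sum (fun _ e => e) + 1 = s.sum (fun _ e => e) := by
      conv_rhs => rw [← hkey]
      rw [Finsupp.sum_add_index (by simp) (by simp)]
      simp
    have hle : s.sum (fun _ e => e) ≤ d + 1 := le_trans (le_totalDegree hs) hp
    show (s - Finsupp.single i 1).sum (fun _ e => e) ≤ d
    omega

theorem exists_tangent_vector_field_coefficients (n d : ℕ)
    (g : MvPolynomial (Fin n) ℂ) (hg : g.totalDegree ≤ d)
    (vfield : Fin n → MvPolynomial (Fin n) ℂ)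
    (hvfield : ∀ j, (vfield j).totalDegree ≤ 1)
    (vlast : ℂ) :
    ∃ v : MvPolynomial (Fin n) ℂ, v.totalDegree ≤ d ∧
      v + ∑ j : Fin n, vfield j * pderiv j g = 0 := by
  refine ⟨-∑ j : Fin n, vfield j * pderiv j g, ?_, by ring⟩
  rw [totalDegree_neg]
  refine (totalDegree_finset_sum _ _).trans (Finset.sup_le fun j _ => ?_)
  rcases Nat.eq_zero_or_pos d with hd | hd
  · subst hd
    have : pderiv j g = 0 := by
      conv_lhs => rw [g.as_sum, map_sum]
      refine Finset.sum_eq_zero fun s hs => ?_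
      have hz := (totalDegree_eq_zero_iff _ g).mp (le_antisymm hg (Nat.zero_le _)) s hs j
      rw [pderiv_monomial, hz]
      simp
    simp [this]
  · refine (totalDegree_mul _ _).trans ?_
    have h1 := hvfield j
    have h2 : (pderiv j g).totalDegree ≤ d - 1 :=
      totalDegree_pderiv_le' j g (by omega)
    omega

end
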